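/- arXiv:1108.4086 — 3 statements merged into one kernel-verified Lean document; each statement's English description precedes it below -/
import Mathlib

section
/- Let f: R^n → R be convex and differentiable. Let (X_t)_{t∈Z} be a real-valued stationary process with law μ on R^Z such that X_0 and each ∂_k f(X_0,…,X_{n−1}) are square integrable. Define S_0(x) = Σ_{k=0}^{n−1} ∂_k f(x_{−k},…,x_{−k+n−1}) and S_t(x) = S_0(L^{−t}x). Then for every jointly stationary pair (Y, Z) with Y distributed as μ and Z distributed as the law of S(X), one has E[(X_0 − S_0(X))²] ≤ E[(Y_0 − Z_0)²]. -/
open MeasureTheory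

/-- The left shift on bilateral real sequences: `(L x) t = x (t-1)`. -/
def leftShift (x : ℤ → ℝ) : ℤ → ℝ := fun t => x (t - 1)

/-- `S_0(x) = ∑_{k=0}^{n-1} ∂_k f (x_{-k}, …, x_{-k+n-1})` for differentiable `f : ℝⁿ → ℝ`. -/
noncomputable def S0 {n : ℕ} (f : (Fin n → ℝ) → ℝ) (x : ℤ → ℝ) : ℝ :=
  ∑ k : Fin n, fderiv ℝ f (fun j : Fin n => x ((j : ℤ) - (k : ℤ))) (Pi.single k 1)

/-- The equivariant map `S` with `S_t(x) = S_0(L^{-t} x)`, `(L^{-t}x)_s = x_{s+t}`. -/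
noncomputable def Smap {n : ℕ} (f : (Fin n → ℝ) → ℝ) : (ℤ → ℝ) → (ℤ → ℝ) :=
  fun x t => S0 f (fun s => x (s + t))

namespace OSCaux

/-- shift by `m`: `(tau m x) t = x (t + m)` -/
def tau (m : ℤ) (x : ℤ → ℝ) : ℤ → ℝ := fun t => x (t + m)

lemma measurable_tau (m : ℤ) : Measurable (tau m) :=
  measurable_pi_lambda _ fun t => measurable_pi_apply _

lemma tau_comp (a b : ℤ) : tau a ∘ tau b = tau (a + b) := by
  funext x t; simp [tau, add_assoc]

lemma tau_zero : tau 0 = id := by funext x t; simp [tau]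

lemma map_tau {P : Measure (ℤ → ℝ)} (h : P.map (tau (-1)) = P) :
    ∀ m : ℤ, P.map (tau m) = P := by
  have h1 : P.map (tau 1) = P := by
    have := congrArg (Measure.map (tau 1)) h
    rw [Measure.map_map (measurable_tau 1) (measurable_tau (-1)), tau_comp,
      (by norm_num : (1 : ℤ) + -1 = 0), tau_zero, Measure.map_id] at this
    exact this.symm
  intro m
  induction m using Int.induction_on with
  | zero => rw [tau_zero, Measure.map_id]
  | succ i ih =>
      have : tau ((i : ℤ) + 1) = tau 1 ∘ tau i := by rw [tau_comp]; ring_nf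
      rw [this, ← Measure.map_map (measurable_tau 1) (measurable_tau i), ih, h1]
  | pred i ih =>
      have : tau (-(i : ℤ) - 1) = tau (-1) ∘ tau (-i) := by rw [tau_comp]; ring_nf
      rw [this, ← Measure.map_map (measurable_tau (-1)) (measurable_tau (-i)), ih, h]

lemma map_tau2 {P : Measure ((ℤ → ℝ) × (ℤ → ℝ))}
    (h : P.map (Prod.map (tau (-1)) (tau (-1))) = P) :
    ∀ m : ℤ, P.map (Prod.map (tau m) (tau m)) = P := by
  have hm : ∀ m : ℤ, Measurable (Prod.map (tau m) (tau m)) :=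
    fun m => (measurable_tau m).prodMap (measurable_tau m)
  have hcomp : ∀ a b : ℤ, Prod.map (tau a) (tau a) ∘ Prod.map (tau b) (tau b)
      = Prod.map (tau (a + b)) (tau (a + b)) := by
    intro a b
    rw [Prod.map_comp_map, tau_comp]
  have h1 : P.map (Prod.map (tau 1) (tau 1)) = P := by
    have := congrArg (Measure.map (Prod.map (tau 1) (tau 1))) h
    rw [Measure.map_map (hm 1) (hm (-1)), hcomp,
      (by norm_num : (1 : ℤ) + -1 = 0), tau_zero, Prod.map_id, Measure.map_id] at this
    exact this.symm
  intro m
  induction m using Int.induction_on with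
  | zero => rw [tau_zero, Prod.map_id, Measure.map_id]
  | succ i ih =>
      have : Prod.map (tau ((i : ℤ) + 1)) (tau ((i : ℤ) + 1))
          = Prod.map (tau 1) (tau 1) ∘ Prod.map (tau i) (tau i) := by
        rw [hcomp]; ring_nf
      rw [this, ← Measure.map_map (hm 1) (hm i), ih, h1]
  | pred i ih =>
      have : Prod.map (tau (-(i : ℤ) - 1)) (tau (-(i : ℤ) - 1))
          = Prod.map (tau (-1)) (tau (-1)) ∘ Prod.map (tau (-i)) (tau (-i)) := by
        rw [hcomp]; ring_nf
      rw [this, ← Measure.map_map (hm (-1)) (hm (-i)), ih, h]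

/-- Gradient inequality for convex differentiable functions. -/
lemma grad_ineq {n : ℕ} {f : (Fin n → ℝ) → ℝ} (hconv : ConvexOn ℝ Set.univ f)
    (hdiff : Differentiable ℝ f) (v u : Fin n → ℝ) :
    fderiv ℝ f v (u - v) ≤ f u - f v := by
  set g : ℝ → ℝ := fun t => f (v + t • (u - v)) with hg
  have hgc : ConvexOn ℝ Set.univ g := by
    have := hconv.comp_affineMap (AffineMap.lineMap v u)
    have hgeq : g = f ∘ (AffineMap.lineMap v u : ℝ →ᵃ[ℝ] (Fin n → ℝ)) := by
      funext t
      simp only [hg, Function.comp_apply, AffineMap.coe_lineMap]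
      congr 1
      simp only [AffineMap.lineMap_apply, vsub_eq_sub, vadd_eq_add]
      module
    rw [hgeq]
    simpa using this
  have hline : HasDerivAt (fun t : ℝ => v + t • (u - v)) (u - v) 0 := by
    have h1 : HasDerivAt (fun t : ℝ => t • (u - v)) ((1 : ℝ) • (u - v)) 0 :=
      (hasDerivAt_id 0).smul_const (u - v)
    simpa using h1.const_add v
  have hder : HasDerivAt g (fderiv ℝ f v (u - v)) 0 := by
    have h0 : (fun t : ℝ => v + t • (u - v)) 0 = v := by simp
    have := (hdiff (v + (0:ℝ) • (u - v))).hasFDerivAt.comp_hasDerivAt 0 hline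
    simp at this ⊢; exact this
  have := hgc.le_slope_of_hasDerivAt (Set.mem_univ 0) (Set.mem_univ 1) zero_lt_one hder
  have hslope : slope g 0 1 = f u - f v := by
    simp [slope, hg]
  rw [hslope] at this
  exact this

lemma fderiv_apply_sum {n : ℕ} (f : (Fin n → ℝ) → ℝ) (v u : Fin n → ℝ) :
    fderiv ℝ f v u = ∑ k : Fin n, u k * fderiv ℝ f v (Pi.single k 1) := by
  have hu : u = ∑ k : Fin n, u k • (Pi.single k 1 : Fin n → ℝ) := by
    funext j
    simp [Pi.single_apply]
  conv_lhs => rw [hu]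
  rw [map_sum]
  congr 1
  funext k
  rw [ContinuousLinearMap.map_smul]
  simp [smul_eq_mul]

lemma integrable_mul2 {γ : Type*} [MeasurableSpace γ] {P : Measure γ} {u v : γ → ℝ}
    (hu : MemLp u 2 P) (hv : MemLp v 2 P) : Integrable (fun x => u x * v x) P := by
  have h1 := hu.integrable_sq
  have h2 := hv.integrable_sq
  refine Integrable.mono' (((h1.add h2)).div_const 2)
    (hu.aestronglyMeasurable.mul hv.aestronglyMeasurable) ?_
  filter_upwards with x
  have h3 : (2 : ℝ) * |u x| * |v x| ≤ |u x| ^ 2 + |v x| ^ 2 := two_mul_le_add_sq _ _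
  have : ‖u x * v x‖ = |u x| * |v x| := by rw [Real.norm_eq_abs, abs_mul]
  rw [this]
  rw [sq_abs, sq_abs] at h3
  simp only [Pi.add_apply]
  linarith


lemma int_fderiv_self {n : ℕ} {f : (Fin n → ℝ) → ℝ}
    (P : Measure (Fin n → ℝ))
    (hcoord : ∀ k, MemLp (fun v => v k) 2 P)
    (hgrad : ∀ k, MemLp (fun v => fderiv ℝ f v (Pi.single k 1)) 2 P) :
    Integrable (fun v => fderiv ℝ f v v) P := by
  have : (fun v : Fin n → ℝ => fderiv ℝ f v v)
      = fun v => ∑ k : Fin n, v k * fderiv ℝ f v (Pi.single k 1) := by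
    funext v; exact fderiv_apply_sum f v v
  rw [this]
  exact integrable_finset_sum _ fun k _ => integrable_mul2 (hcoord k) (hgrad k)

lemma int_fderiv_zero {n : ℕ} {f : (Fin n → ℝ) → ℝ}
    (P : Measure (Fin n → ℝ)) [IsProbabilityMeasure P]
    (hcoord : ∀ k, MemLp (fun v => v k) 2 P) :
    Integrable (fun v => fderiv ℝ f 0 v) P := by
  have : (fun v : Fin n → ℝ => fderiv ℝ f 0 v)
      = fun v => ∑ k : Fin n, v k * fderiv ℝ f 0 (Pi.single k 1) := by
    funext v; exact fderiv_apply_sum f 0 v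
  rw [this]
  refine integrable_finset_sum _ fun k _ => ?_
  exact ((hcoord k).integrable (by norm_num)).mul_const _

lemma f_int {n : ℕ} {f : (Fin n → ℝ) → ℝ} (hconv : ConvexOn ℝ Set.univ f)
    (hdiff : Differentiable ℝ f)
    (P : Measure (Fin n → ℝ)) [IsProbabilityMeasure P]
    (hcoord : ∀ k, MemLp (fun v => v k) 2 P)
    (hgrad : ∀ k, MemLp (fun v => fderiv ℝ f v (Pi.single k 1)) 2 P) :
    Integrable f P := by
  have hup : ∀ v, f v ≤ f 0 + fderiv ℝ f v v := by
    intro v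
    have h := grad_ineq hconv hdiff v 0
    rw [zero_sub, ContinuousLinearMap.map_neg] at h
    linarith
  have hlo : ∀ v, f 0 + fderiv ℝ f 0 v ≤ f v := by
    intro v
    have h := grad_ineq hconv hdiff 0 v
    rw [sub_zero] at h
    linarith
  have hb : Integrable
      (fun v => |f 0| + |fderiv ℝ f 0 v| + |fderiv ℝ f v v|) P := by
    exact ((integrable_const _).add (int_fderiv_zero P hcoord).abs).add
      (int_fderiv_self P hcoord hgrad).abs
  refine Integrable.mono' hb hdiff.continuous.aestronglyMeasurable ?_
  filter_upwards with v
  rw [Real.norm_eq_abs, abs_le]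
  constructor
  · have := hlo v
    have h1 := le_abs_self (f 0); have h2 := neg_abs_le (f 0)
    have h3 := le_abs_self (fderiv ℝ f 0 v); have h4 := neg_abs_le (fderiv ℝ f 0 v)
    have h5 := abs_nonneg (fderiv ℝ f v v)
    linarith
  · have := hup v
    have h1 := le_abs_self (f 0)
    have h3 := le_abs_self (fderiv ℝ f v v)
    have h5 := abs_nonneg (fderiv ℝ f 0 v)
    linarith

/-- window of length `n` starting at `s` -/
def win (n : ℕ) (s : ℤ) (x : ℤ → ℝ) : Fin n → ℝ := fun j => x (s + (j : ℤ))

lemma measurable_win {n : ℕ} (s : ℤ) : Measurable (win n s) :=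
  measurable_pi_lambda _ fun _ => measurable_pi_apply _

lemma measurable_G {n : ℕ} (f : (Fin n → ℝ) → ℝ) (k : Fin n) :
    Measurable (fun v : Fin n → ℝ => fderiv ℝ f v (Pi.single k 1)) :=
  measurable_fderiv_apply_const ℝ f _

lemma measurable_S0 {n : ℕ} (f : (Fin n → ℝ) → ℝ) : Measurable (S0 f) := by
  unfold S0
  refine Finset.measurable_sum _ fun k _ => ?_
  exact (measurable_G f k).comp
    (measurable_pi_lambda _ fun _ => measurable_pi_apply _)

lemma measurable_Smap {n : ℕ} (f : (Fin n → ℝ) → ℝ) : Measurable (Smap f) := by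
  refine measurable_pi_lambda _ fun t => ?_
  exact (measurable_S0 f).comp (measurable_pi_lambda _ fun _ => measurable_pi_apply _)

lemma measurable_leftShift : Measurable leftShift :=
  measurable_pi_lambda _ fun _ => measurable_pi_apply _

lemma leftShift_eq_tau : leftShift = tau (-1) := by
  funext x t; simp [leftShift, tau, sub_eq_add_neg]

/-- transfer of `MemLp` along a pushforward -/
lemma memL2_of_map {δ γ : Type*} [MeasurableSpace δ] [MeasurableSpace γ]
    {P : Measure δ} {Q : Measure γ} {T : δ → γ} (hT : Measurable T)
    (hPQ : P.map T = Q) {φ : γ → ℝ} (hφ : Measurable φ) (h : MemLp φ 2 Q) :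
    MemLp (fun x => φ (T x)) 2 P := by
  rw [← hPQ] at h
  exact (memLp_map_measure_iff hφ.aestronglyMeasurable hT.aemeasurable).1 h

lemma integral_of_map {δ γ : Type*} [MeasurableSpace δ] [MeasurableSpace γ]
    {P : Measure δ} {Q : Measure γ} {T : δ → γ} (hT : Measurable T)
    (hPQ : P.map T = Q) {φ : γ → ℝ} (hφ : Measurable φ) :
    ∫ x, φ (T x) ∂P = ∫ y, φ y ∂Q := by
  rw [← hPQ, integral_map hT.aemeasurable hφ.aestronglyMeasurable]

lemma integrable_of_map {δ γ : Type*} [MeasurableSpace δ] [MeasurableSpace γ]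
    {P : Measure δ} {Q : Measure γ} {T : δ → γ} (hT : Measurable T)
    (hPQ : P.map T = Q) {φ : γ → ℝ} (hφ : Measurable φ) (h : Integrable φ Q) :
    Integrable (fun x => φ (T x)) P := by
  rw [← hPQ] at h
  exact (integrable_map_measure hφ.aestronglyMeasurable hT.aemeasurable).1 h

lemma abs_mul_le_half (a b : ℝ) : |a * b| ≤ (a ^ 2 + b ^ 2) / 2 := by
  have h := two_mul_le_add_sq |a| |b|
  rw [sq_abs, sq_abs] at h
  rw [abs_mul]
  linarith

lemma measurable_fds {n : ℕ} (f : (Fin n → ℝ) → ℝ) :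
    Measurable (fun v : Fin n → ℝ => fderiv ℝ f v v) := by
  have he : (fun v : Fin n → ℝ => fderiv ℝ f v v)
      = fun v => ∑ k : Fin n, v k * fderiv ℝ f v (Pi.single k 1) :=
    funext fun v => fderiv_apply_sum f v v
  rw [he]
  exact Finset.measurable_sum _ fun k _ => (measurable_pi_apply k).mul (measurable_G f k)

set_option maxHeartbeats 1000000 in
theorem key {n : ℕ} (f : (Fin n → ℝ) → ℝ) (hconv : ConvexOn ℝ Set.univ f)
    (hdiff : Differentiable ℝ f)
    (μX : Measure (ℤ → ℝ)) [IsProbabilityMeasure μX]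
    (hstat : μX.map (tau (-1)) = μX)
    (hx0 : MemLp (fun x => x 0) 2 μX)
    (hg : ∀ k : Fin n,
      MemLp (fun x => fderiv ℝ f (fun j : Fin n => x (j : ℤ)) (Pi.single k 1)) 2 μX)
    (π : Measure ((ℤ → ℝ) × (ℤ → ℝ))) [IsProbabilityMeasure π]
    (hπstat : π.map (Prod.map (tau (-1)) (tau (-1))) = π)
    (hπ1 : π.map Prod.fst = μX)
    (hπ2 : π.map Prod.snd = μX.map (Smap f)) :
    ∫ x, (x 0 - S0 f x) ^ 2 ∂μX ≤ ∫ p, (p.1 0 - p.2 0) ^ 2 ∂π := by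
  classical
  have hτ : ∀ m : ℤ, μX.map (tau m) = μX := map_tau hstat
  have hπτ : ∀ m : ℤ, π.map (Prod.map (tau m) (tau m)) = π := map_tau2 hπstat
  set μS : Measure (ℤ → ℝ) := μX.map (Smap f) with hμS
  haveI : IsProbabilityMeasure μS :=
    Measure.isProbabilityMeasure_map (measurable_Smap f).aemeasurable
  set μn : Measure (Fin n → ℝ) := μX.map (win n 0) with hμn
  haveI : IsProbabilityMeasure μn :=
    Measure.isProbabilityMeasure_map (measurable_win 0).aemeasurable
  have hwin_comp : ∀ s : ℤ, (win n 0) ∘ (tau s) = win n s := by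
    intro s; funext x j; simp [win, tau]; ring_nf
  have hwin_map : ∀ s : ℤ, μX.map (win n s) = μn := by
    intro s
    rw [hμn, ← hwin_comp s, ← Measure.map_map (measurable_win 0) (measurable_tau s), hτ]
  have hxt : ∀ t : ℤ, MemLp (fun x : ℤ → ℝ => x t) 2 μX := by
    intro t
    have he : (fun x : ℤ → ℝ => x t) = fun x => (tau t x) 0 := by
      funext x; simp [tau]
    rw [he]
    exact memL2_of_map (measurable_tau t) (hτ t) (measurable_pi_apply 0) hx0
  have hcoord : ∀ k : Fin n, MemLp (fun v : Fin n → ℝ => v k) 2 μn := by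
    intro k
    rw [hμn]
    refine (memLp_map_measure_iff (measurable_pi_apply k).aestronglyMeasurable
      (measurable_win 0).aemeasurable).2 ?_
    have he : ((fun v : Fin n → ℝ => v k) ∘ win n 0) = fun x : ℤ → ℝ => x (k : ℤ) := by
      funext x; simp [win]
    rw [he]; exact hxt _
  have hGk : ∀ k : Fin n, MemLp (fun v => fderiv ℝ f v (Pi.single k 1)) 2 μn := by
    intro k
    rw [hμn]
    refine (memLp_map_measure_iff (measurable_G f k).aestronglyMeasurable
      (measurable_win 0).aemeasurable).2 ?_
    have he : ((fun v => fderiv ℝ f v (Pi.single k 1)) ∘ win n 0)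
        = fun x : ℤ → ℝ => fderiv ℝ f (fun j : Fin n => x (j : ℤ)) (Pi.single k 1) := by
      funext x
      have hw : win n 0 x = fun j : Fin n => x (j : ℤ) := by funext j; simp [win]
      simp only [Function.comp_apply, hw]
    rw [he]; exact hg k
  have hfint : Integrable f μn := f_int hconv hdiff μn hcoord hGk
  have hfds_int : Integrable (fun v => fderiv ℝ f v v) μn := int_fderiv_self μn hcoord hGk
  have hS0_eq : S0 f = fun x => ∑ k : Fin n,
      fderiv ℝ f (win n (-(k : ℤ)) x) (Pi.single k 1) := by
    funext x; unfold S0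
    refine Finset.sum_congr rfl fun k _ => ?_
    have hw : (fun j : Fin n => x ((j : ℤ) - (k : ℤ))) = win n (-(k : ℤ)) x := by
      funext j; simp only [win]; congr 1; ring
    rw [hw]
  have hS0_L2 : MemLp (S0 f) 2 μX := by
    rw [hS0_eq]
    refine memLp_finset_sum _ fun k _ => ?_
    exact memL2_of_map (measurable_win _) (hwin_map _) (measurable_G f k) (hGk k)
  -- gluing construction
  set ρ₀ : Measure ((ℤ → ℝ) × (ℤ → ℝ)) := μX.map (fun x => (Smap f x, x)) with hρ₀
  have hρ₀m : Measurable fun x : ℤ → ℝ => (Smap f x, x) :=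
    (measurable_Smap f).prodMk measurable_id
  haveI : IsProbabilityMeasure ρ₀ := Measure.isProbabilityMeasure_map hρ₀m.aemeasurable
  have hρ₀fst : ρ₀.fst = μS := by
    show ρ₀.map Prod.fst = μS
    rw [hρ₀, Measure.map_map measurable_fst hρ₀m, hμS]
    rfl
  set κ := ρ₀.condKernel with hκdef
  set κ' := ProbabilityTheory.Kernel.comap κ
    (Prod.snd : (ℤ → ℝ) × (ℤ → ℝ) → (ℤ → ℝ)) measurable_snd with hκ'def
  set ρ : Measure (((ℤ → ℝ) × (ℤ → ℝ)) × (ℤ → ℝ)) := π.compProd κ' with hρdef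
  have hκ'app : ∀ p : (ℤ → ℝ) × (ℤ → ℝ), κ' p = κ p.2 := fun p => rfl
  have hρsnd : ρ.map Prod.snd = μX := by
    ext s hs
    rw [Measure.map_apply measurable_snd hs, hρdef,
      Measure.compProd_apply (measurable_snd hs)]
    have h1 : ∀ p : (ℤ → ℝ) × (ℤ → ℝ),
        κ' p (Prod.mk p ⁻¹' (Prod.snd ⁻¹' s)) = κ p.2 s := by
      intro p; rw [hκ'app]; congr 1
    simp_rw [h1]
    have h2 : ∫⁻ p : (ℤ → ℝ) × (ℤ → ℝ), κ p.2 s ∂π = ∫⁻ z, κ z s ∂μS := by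
      rw [← hπ2]
      exact (lintegral_map (κ.measurable_coe hs) measurable_snd).symm
    rw [h2, ← hρ₀fst]
    have h3 : ρ₀ (Prod.snd ⁻¹' s) = ∫⁻ z, κ z s ∂ρ₀.fst := by
      conv_lhs => rw [← ρ₀.disintegrate ρ₀.condKernel]
      rw [Measure.compProd_apply (measurable_snd hs)]
      exact lintegral_congr fun z => rfl
    rw [← h3, hρ₀, Measure.map_apply hρ₀m (measurable_snd hs)]
    rfl
  have hEmeas : MeasurableSet {r : (ℤ → ℝ) × (ℤ → ℝ) | r.1 = Smap f r.2} :=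
    measurableSet_eq_fun measurable_fst ((measurable_Smap f).comp measurable_snd)
  have hae : ∀ᵐ q ∂ρ, q.1.2 = Smap f q.2 := by
    rw [ae_iff]
    have hBad : MeasurableSet {q : ((ℤ → ℝ) × (ℤ → ℝ)) × (ℤ → ℝ) |
        ¬ q.1.2 = Smap f q.2} := by
      have : {q : ((ℤ → ℝ) × (ℤ → ℝ)) × (ℤ → ℝ) | ¬ q.1.2 = Smap f q.2}
          = (fun q : ((ℤ → ℝ) × (ℤ → ℝ)) × (ℤ → ℝ) => (q.1.2, q.2)) ⁻¹'
            {r : (ℤ → ℝ) × (ℤ → ℝ) | r.1 = Smap f r.2}ᶜ := by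
        ext q; simp
      rw [this]
      exact (measurable_fst.snd.prodMk measurable_snd) hEmeas.compl
    rw [hρdef, Measure.compProd_apply hBad]
    have h1 : ∀ p : (ℤ → ℝ) × (ℤ → ℝ),
        κ' p (Prod.mk p ⁻¹' {q : ((ℤ → ℝ) × (ℤ → ℝ)) × (ℤ → ℝ) | ¬ q.1.2 = Smap f q.2})
        = κ p.2 (Prod.mk p.2 ⁻¹' {r : (ℤ → ℝ) × (ℤ → ℝ) | r.1 = Smap f r.2}ᶜ) := by
      intro p; rw [hκ'app]; congr 1
    simp_rw [h1]
    have h2 : ∫⁻ p : (ℤ → ℝ) × (ℤ → ℝ),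
        κ p.2 (Prod.mk p.2 ⁻¹' {r : (ℤ → ℝ) × (ℤ → ℝ) | r.1 = Smap f r.2}ᶜ) ∂π
        = ∫⁻ z, κ z (Prod.mk z ⁻¹' {r : (ℤ → ℝ) × (ℤ → ℝ) | r.1 = Smap f r.2}ᶜ) ∂μS := by
      rw [← hπ2]
      exact (lintegral_map
        (ProbabilityTheory.Kernel.measurable_kernel_prodMk_left hEmeas.compl)
        measurable_snd).symm
    rw [h2, ← hρ₀fst, ← Measure.compProd_apply hEmeas.compl,
      ρ₀.disintegrate ρ₀.condKernel, hρ₀,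
      Measure.map_apply hρ₀m hEmeas.compl]
    have hemp : ((fun x => (Smap f x, x)) ⁻¹' {r : (ℤ → ℝ) × (ℤ → ℝ) | r.1 = Smap f r.2}ᶜ)
        = (∅ : Set (ℤ → ℝ)) := by
      ext x; simp
    rw [hemp]
    simp
  have hρfst : ρ.map Prod.fst = π := by
    rw [hρdef]
    exact Measure.fst_compProd π κ'
  -- marginals of ρ
  have hρ1 : ρ.map (fun q : ((ℤ → ℝ) × (ℤ → ℝ)) × (ℤ → ℝ) => q.1.1) = μX := by
    have he : (fun q : ((ℤ → ℝ) × (ℤ → ℝ)) × (ℤ → ℝ) => q.1.1)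
        = Prod.fst ∘ Prod.fst := rfl
    rw [he, ← Measure.map_map measurable_fst measurable_fst, hρfst, hπ1]
  have hρ2 : ρ.map (fun q : ((ℤ → ℝ) × (ℤ → ℝ)) × (ℤ → ℝ) => q.2) = μX := hρsnd
  have hρywin : ∀ s : ℤ,
      ρ.map (fun q : ((ℤ → ℝ) × (ℤ → ℝ)) × (ℤ → ℝ) => win n s q.1.1) = μn := by
    intro s
    have he : (fun q : ((ℤ → ℝ) × (ℤ → ℝ)) × (ℤ → ℝ) => win n s q.1.1)
        = (win n s) ∘ (fun q : ((ℤ → ℝ) × (ℤ → ℝ)) × (ℤ → ℝ) => q.1.1) := rfl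
    rw [he, ← Measure.map_map (measurable_win s) measurable_fst.fst, hρ1, hwin_map]
  have hρwwin : ∀ s : ℤ,
      ρ.map (fun q : ((ℤ → ℝ) × (ℤ → ℝ)) × (ℤ → ℝ) => win n s q.2) = μn := by
    intro s
    have he : (fun q : ((ℤ → ℝ) × (ℤ → ℝ)) × (ℤ → ℝ) => win n s q.2)
        = (win n s) ∘ (Prod.snd : ((ℤ → ℝ) × (ℤ → ℝ)) × (ℤ → ℝ) → (ℤ → ℝ)) := rfl
    rw [he, ← Measure.map_map (measurable_win s) measurable_snd, hρsnd, hwin_map]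
  have hρy : ∀ t : ℤ, MemLp (fun q : ((ℤ → ℝ) × (ℤ → ℝ)) × (ℤ → ℝ) => q.1.1 t) 2 ρ :=
    fun t => memL2_of_map measurable_fst.fst hρ1 (measurable_pi_apply t) (hxt t)
  have hρGk : ∀ (s : ℤ) (k : Fin n),
      MemLp (fun q : ((ℤ → ℝ) × (ℤ → ℝ)) × (ℤ → ℝ) =>
        fderiv ℝ f (win n s q.2) (Pi.single k 1)) 2 ρ :=
    fun s k => memL2_of_map ((measurable_win s).comp measurable_snd) (hρwwin s)
      (measurable_G f k) (hGk k)
  have hint_g : ∀ (s : ℤ) (k : Fin n),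
      Integrable (fun q : ((ℤ → ℝ) × (ℤ → ℝ)) × (ℤ → ℝ) =>
        q.1.1 (s + (k : ℤ)) * fderiv ℝ f (win n s q.2) (Pi.single k 1)) ρ :=
    fun s k => integrable_mul2 (hρy _) (hρGk s k)
  set c : ℝ := ∫ p : (ℤ → ℝ) × (ℤ → ℝ), p.1 0 * p.2 0 ∂π with hc
  set D : ℝ := ∑ k : Fin n, ∫ v, v k * fderiv ℝ f v (Pi.single k 1) ∂μn with hD
  set gI : ℤ → Fin n → ℝ := fun s k =>
    ∫ q : ((ℤ → ℝ) × (ℤ → ℝ)) × (ℤ → ℝ),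
      q.1.1 (s + (k : ℤ)) * fderiv ℝ f (win n s q.2) (Pi.single k 1) ∂ρ with hgIdef
  have F1 : ∀ t : ℤ,
      (∫ q : ((ℤ → ℝ) × (ℤ → ℝ)) × (ℤ → ℝ), q.1.1 t * q.1.2 t ∂ρ) = c := by
    intro t
    have hmeas : ∀ u : ℤ, Measurable fun p : (ℤ → ℝ) × (ℤ → ℝ) => p.1 u * p.2 u :=
      fun u => (measurable_fst.eval).mul (measurable_snd.eval)
    have e1 := integral_of_map (P := ρ) (T := Prod.fst) measurable_fst hρfst (hmeas t)
    rw [show (∫ q : ((ℤ → ℝ) × (ℤ → ℝ)) × (ℤ → ℝ), q.1.1 t * q.1.2 t ∂ρ)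
        = ∫ q : ((ℤ → ℝ) × (ℤ → ℝ)) × (ℤ → ℝ), (q.1).1 t * (q.1).2 t ∂ρ from rfl, e1, hc]
    conv_rhs => rw [← hπτ t,
      integral_map ((measurable_tau t).prodMap (measurable_tau t)).aemeasurable
        (hmeas 0).aestronglyMeasurable]
    refine integral_congr_ae (Filter.Eventually.of_forall fun p => ?_)
    simp [tau]
  have hSmap_win : ∀ (w : ℤ → ℝ) (t : ℤ), Smap f w t
      = ∑ k : Fin n, fderiv ℝ f (win n (t - (k : ℤ)) w) (Pi.single k 1) := by
    intro w t
    show S0 f (fun s => w (s + t)) = _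
    unfold S0
    refine Finset.sum_congr rfl fun k _ => ?_
    have hw : (fun j : Fin n => (fun s => w (s + t)) ((j : ℤ) - (k : ℤ)))
        = win n (t - (k : ℤ)) w := by
      funext j; simp only [win]; congr 1; ring
    rw [hw]
  have F2 : ∀ t : ℤ,
      (∫ q : ((ℤ → ℝ) × (ℤ → ℝ)) × (ℤ → ℝ), q.1.1 t * q.1.2 t ∂ρ)
        = ∑ k : Fin n, gI (t - (k : ℤ)) k := by
    intro t
    have e1 : (∫ q : ((ℤ → ℝ) × (ℤ → ℝ)) × (ℤ → ℝ), q.1.1 t * q.1.2 t ∂ρ)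
        = ∫ q : ((ℤ → ℝ) × (ℤ → ℝ)) × (ℤ → ℝ), ∑ k : Fin n,
            q.1.1 ((t - (k : ℤ)) + (k : ℤ))
              * fderiv ℝ f (win n (t - (k : ℤ)) q.2) (Pi.single k 1) ∂ρ := by
      refine integral_congr_ae ?_
      filter_upwards [hae] with q hq
      rw [hq, hSmap_win, Finset.mul_sum]
      refine Finset.sum_congr rfl fun k _ => ?_
      congr 2
      ring
    rw [e1, integral_finset_sum _ (fun k _ => hint_g _ k)]
  have hintL : ∀ s : ℤ, Integrable
      (fun q : ((ℤ → ℝ) × (ℤ → ℝ)) × (ℤ → ℝ) =>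
        fderiv ℝ f (win n s q.2) (win n s q.1.1)) ρ := by
    intro s
    have he : (fun q : ((ℤ → ℝ) × (ℤ → ℝ)) × (ℤ → ℝ) =>
        fderiv ℝ f (win n s q.2) (win n s q.1.1))
        = fun q => ∑ k : Fin n,
            q.1.1 (s + (k : ℤ)) * fderiv ℝ f (win n s q.2) (Pi.single k 1) := by
      funext q
      rw [fderiv_apply_sum]
      rfl
    rw [he]
    exact integrable_finset_sum _ fun k _ => hint_g s k
  have hint_fy : ∀ s : ℤ, Integrable
      (fun q : ((ℤ → ℝ) × (ℤ → ℝ)) × (ℤ → ℝ) => f (win n s q.1.1)) ρ :=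
    fun s => integrable_of_map ((measurable_win s).comp measurable_fst.fst) (hρywin s)
      hdiff.continuous.measurable hfint
  have hint_fw : ∀ s : ℤ, Integrable
      (fun q : ((ℤ → ℝ) × (ℤ → ℝ)) × (ℤ → ℝ) => f (win n s q.2)) ρ :=
    fun s => integrable_of_map ((measurable_win s).comp measurable_snd) (hρwwin s)
      hdiff.continuous.measurable hfint
  have hint_dw : ∀ s : ℤ, Integrable
      (fun q : ((ℤ → ℝ) × (ℤ → ℝ)) × (ℤ → ℝ) =>
        fderiv ℝ f (win n s q.2) (win n s q.2)) ρ :=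
    fun s => integrable_of_map ((measurable_win s).comp measurable_snd) (hρwwin s)
      (measurable_fds f) hfds_int
  have F3 : ∀ s : ℤ, (∑ k : Fin n, gI s k) ≤ D := by
    intro s
    have e1 : (∑ k : Fin n, gI s k)
        = ∫ q : ((ℤ → ℝ) × (ℤ → ℝ)) × (ℤ → ℝ),
            fderiv ℝ f (win n s q.2) (win n s q.1.1) ∂ρ := by
      have hfe : (fun q : ((ℤ → ℝ) × (ℤ → ℝ)) × (ℤ → ℝ) =>
          fderiv ℝ f (win n s q.2) (win n s q.1.1))
          = fun q => ∑ k : Fin n,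
              q.1.1 (s + (k : ℤ)) * fderiv ℝ f (win n s q.2) (Pi.single k 1) := by
        funext q; rw [fderiv_apply_sum]; rfl
      simp only [hgIdef]
      rw [hfe, integral_finset_sum _ (fun k _ => hint_g s k)]
    rw [e1]
    have e2 : (∫ q : ((ℤ → ℝ) × (ℤ → ℝ)) × (ℤ → ℝ),
          fderiv ℝ f (win n s q.2) (win n s q.1.1) ∂ρ)
        ≤ ∫ q : ((ℤ → ℝ) × (ℤ → ℝ)) × (ℤ → ℝ),
            (f (win n s q.1.1) - f (win n s q.2)
              + fderiv ℝ f (win n s q.2) (win n s q.2)) ∂ρ := by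
      have H2 : Integrable (fun q : ((ℤ → ℝ) × (ℤ → ℝ)) × (ℤ → ℝ) =>
          f (win n s q.1.1) - f (win n s q.2)
            + fderiv ℝ f (win n s q.2) (win n s q.2)) ρ := by
        exact (((hint_fy s).sub (hint_fw s)).add (hint_dw s))
      refine integral_mono (hintL s) H2 fun q => ?_
      have h := grad_ineq hconv hdiff (win n s q.2) (win n s q.1.1)
      rw [map_sub] at h
      simp only
      linarith
    refine le_trans e2 ?_
    have H1 : Integrable (fun q : ((ℤ → ℝ) × (ℤ → ℝ)) × (ℤ → ℝ) =>
        f (win n s q.1.1) - f (win n s q.2)) ρ := (hint_fy s).sub (hint_fw s)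
    rw [integral_add H1 (hint_dw s), integral_sub (hint_fy s) (hint_fw s)]
    have ey : (∫ q : ((ℤ → ℝ) × (ℤ → ℝ)) × (ℤ → ℝ), f (win n s q.1.1) ∂ρ)
        = ∫ v, f v ∂μn :=
      integral_of_map ((measurable_win s).comp measurable_fst.fst) (hρywin s)
        hdiff.continuous.measurable
    have ew : (∫ q : ((ℤ → ℝ) × (ℤ → ℝ)) × (ℤ → ℝ), f (win n s q.2) ∂ρ)
        = ∫ v, f v ∂μn :=
      integral_of_map ((measurable_win s).comp measurable_snd) (hρwwin s)
        hdiff.continuous.measurable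
    have ed : (∫ q : ((ℤ → ℝ) × (ℤ → ℝ)) × (ℤ → ℝ),
          fderiv ℝ f (win n s q.2) (win n s q.2) ∂ρ)
        = ∫ v, fderiv ℝ f v v ∂μn :=
      integral_of_map ((measurable_win s).comp measurable_snd) (hρwwin s)
        (measurable_fds f)
    have eD : (∫ v, fderiv ℝ f v v ∂μn) = D := by
      rw [hD, ← integral_finset_sum _ (fun k _ => integrable_mul2 (hcoord k) (hGk k))]
      exact integral_congr_ae (Filter.Eventually.of_forall fun v => fderiv_apply_sum f v v)
    rw [ey, ew, ed, eD]
    linarith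
  set A : ℝ := ∫ x, (x 0) ^ 2 ∂μX with hA
  set B : Fin n → ℝ := fun k => ∫ v, (fderiv ℝ f v (Pi.single k 1)) ^ 2 ∂μn with hB
  have hsq_y : ∀ t : ℤ, (∫ q : ((ℤ → ℝ) × (ℤ → ℝ)) × (ℤ → ℝ), (q.1.1 t) ^ 2 ∂ρ) = A := by
    intro t
    have e1 : (∫ q : ((ℤ → ℝ) × (ℤ → ℝ)) × (ℤ → ℝ), (q.1.1 t) ^ 2 ∂ρ)
        = ∫ x, (x t) ^ 2 ∂μX :=
      integral_of_map measurable_fst.fst hρ1 ((measurable_pi_apply t).pow_const 2)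
    rw [e1, hA]
    conv_rhs => rw [← hτ t,
      integral_map (measurable_tau t).aemeasurable
        ((measurable_pi_apply 0).pow_const 2).aestronglyMeasurable]
    refine integral_congr_ae (Filter.Eventually.of_forall fun x => ?_)
    simp [tau]
  have hsq_G : ∀ (s : ℤ) (k : Fin n),
      (∫ q : ((ℤ → ℝ) × (ℤ → ℝ)) × (ℤ → ℝ),
        (fderiv ℝ f (win n s q.2) (Pi.single k 1)) ^ 2 ∂ρ) = B k :=
    fun s k => integral_of_map ((measurable_win s).comp measurable_snd) (hρwwin s)
      ((measurable_G f k).pow_const 2)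
  have F4 : ∀ (s : ℤ) (k : Fin n), |gI s k| ≤ (A + B k) / 2 := by
    intro s k
    have h1 : |gI s k| ≤ ∫ q : ((ℤ → ℝ) × (ℤ → ℝ)) × (ℤ → ℝ),
        |q.1.1 (s + (k : ℤ)) * fderiv ℝ f (win n s q.2) (Pi.single k 1)| ∂ρ := by
      simp only [hgIdef]
      have hni := norm_integral_le_integral_norm (μ := ρ)
        (fun q : ((ℤ → ℝ) × (ℤ → ℝ)) × (ℤ → ℝ) =>
          q.1.1 (s + (k : ℤ)) * fderiv ℝ f (win n s q.2) (Pi.single k 1))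
      simpa only [Real.norm_eq_abs] using hni
    have hintsq1 : Integrable
        (fun q : ((ℤ → ℝ) × (ℤ → ℝ)) × (ℤ → ℝ) => (q.1.1 (s + (k : ℤ))) ^ 2) ρ :=
      (hρy _).integrable_sq
    have hintsq2 : Integrable (fun q : ((ℤ → ℝ) × (ℤ → ℝ)) × (ℤ → ℝ) =>
        (fderiv ℝ f (win n s q.2) (Pi.single k 1)) ^ 2) ρ := (hρGk s k).integrable_sq
    have h2 : (∫ q : ((ℤ → ℝ) × (ℤ → ℝ)) × (ℤ → ℝ),
          |q.1.1 (s + (k : ℤ)) * fderiv ℝ f (win n s q.2) (Pi.single k 1)| ∂ρ)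
        ≤ ∫ q : ((ℤ → ℝ) × (ℤ → ℝ)) × (ℤ → ℝ),
            ((q.1.1 (s + (k : ℤ))) ^ 2
              + (fderiv ℝ f (win n s q.2) (Pi.single k 1)) ^ 2) / 2 ∂ρ :=
      integral_mono (hint_g s k).abs ((hintsq1.add hintsq2).div_const 2)
        fun q => abs_mul_le_half _ _
    have h3 : (∫ q : ((ℤ → ℝ) × (ℤ → ℝ)) × (ℤ → ℝ),
          ((q.1.1 (s + (k : ℤ))) ^ 2
            + (fderiv ℝ f (win n s q.2) (Pi.single k 1)) ^ 2) / 2 ∂ρ)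
        = (A + B k) / 2 := by
      rw [integral_div, integral_add hintsq1 hintsq2, hsq_y, hsq_G]
    linarith
  have hApos : 0 ≤ A := integral_nonneg fun x => sq_nonneg _
  have hBpos : ∀ k : Fin n, 0 ≤ B k := fun k => integral_nonneg fun v => sq_nonneg _
  -- shifted-sum comparison
  have hshift : ∀ (N : ℕ) (k : Fin n), n ≤ N →
      (∑ t ∈ Finset.range N, gI ((t : ℤ) - (k : ℤ)) k)
        ≤ (∑ t ∈ Finset.range N, gI (t : ℤ) k) + 2 * (k : ℝ) * ((A + B k) / 2) := by
    intro N k hnN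
    have hkN : (k : ℕ) ≤ N := le_trans (le_of_lt k.isLt) hnN
    have hC : ∀ s : ℤ, gI s k ≤ (A + B k) / 2 := fun s => le_trans (le_abs_self _) (F4 s k)
    have hC' : ∀ s : ℤ, -((A + B k) / 2) ≤ gI s k :=
      fun s => neg_le_of_abs_le (F4 s k)
    have h1 : (∑ t ∈ Finset.range N, gI ((t : ℤ) - (k : ℤ)) k)
        = (∑ t ∈ Finset.range (k : ℕ), gI ((t : ℤ) - (k : ℤ)) k)
          + ∑ i ∈ Finset.range (N - (k : ℕ)), gI (i : ℤ) k := by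
      rw [← Finset.sum_range_add_sum_Ico _ hkN]
      congr 1
      rw [Finset.sum_Ico_eq_sum_range]
      refine Finset.sum_congr rfl fun i _ => ?_
      congr 1
      push_cast
      ring
    have h2 : (∑ t ∈ Finset.range N, gI (t : ℤ) k)
        = (∑ i ∈ Finset.range (N - (k : ℕ)), gI (i : ℤ) k)
          + ∑ t ∈ Finset.Ico (N - (k : ℕ)) N, gI (t : ℤ) k := by
      rw [← Finset.sum_range_add_sum_Ico _ (Nat.sub_le N (k : ℕ))]
    have h3 : (∑ t ∈ Finset.range (k : ℕ), gI ((t : ℤ) - (k : ℤ)) k)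
        ≤ (k : ℝ) * ((A + B k) / 2) := by
      calc (∑ t ∈ Finset.range (k : ℕ), gI ((t : ℤ) - (k : ℤ)) k)
          ≤ ∑ t ∈ Finset.range (k : ℕ), (A + B k) / 2 :=
            Finset.sum_le_sum fun t _ => hC _
        _ = (k : ℝ) * ((A + B k) / 2) := by
            rw [Finset.sum_const, Finset.card_range, nsmul_eq_mul]
    have h4 : -((k : ℝ) * ((A + B k) / 2)) ≤ ∑ t ∈ Finset.Ico (N - (k : ℕ)) N, gI (t : ℤ) k := by
      have : (∑ t ∈ Finset.Ico (N - (k : ℕ)) N, -((A + B k) / 2))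
          ≤ ∑ t ∈ Finset.Ico (N - (k : ℕ)) N, gI (t : ℤ) k :=
        Finset.sum_le_sum fun t _ => hC' _
      calc -((k : ℝ) * ((A + B k) / 2))
          = ∑ t ∈ Finset.Ico (N - (k : ℕ)) N, -((A + B k) / 2) := by
            rw [Finset.sum_const, Nat.card_Ico, nsmul_eq_mul]
            rw [Nat.sub_sub_self hkN]
            ring
        _ ≤ _ := this
    rw [h1, h2]
    linarith
  -- N c ≤ N D + E
  have hNc : ∀ N : ℕ, n ≤ N →
      (N : ℝ) * c ≤ (N : ℝ) * D + ∑ k : Fin n, 2 * (k : ℝ) * ((A + B k) / 2) := by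
    intro N hN
    have h1 : (N : ℝ) * c = ∑ t ∈ Finset.range N, ∑ k : Fin n, gI ((t : ℤ) - (k : ℤ)) k := by
      rw [show (N : ℝ) * c = ∑ _t ∈ Finset.range N, c from by
        rw [Finset.sum_const, Finset.card_range, nsmul_eq_mul]]
      exact Finset.sum_congr rfl fun t _ => (F1 (t : ℤ)).symm.trans (F2 (t : ℤ))
    calc (N : ℝ) * c
        = ∑ k : Fin n, ∑ t ∈ Finset.range N, gI ((t : ℤ) - (k : ℤ)) k := by
          rw [h1]; exact Finset.sum_comm
      _ ≤ ∑ k : Fin n, ((∑ t ∈ Finset.range N, gI (t : ℤ) k)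
            + 2 * (k : ℝ) * ((A + B k) / 2)) :=
          Finset.sum_le_sum fun k _ => hshift N k hN
      _ = (∑ t ∈ Finset.range N, ∑ k : Fin n, gI (t : ℤ) k)
            + ∑ k : Fin n, 2 * (k : ℝ) * ((A + B k) / 2) := by
          rw [Finset.sum_add_distrib]
          congr 1
          exact Finset.sum_comm
      _ ≤ (∑ _t ∈ Finset.range N, D) + ∑ k : Fin n, 2 * (k : ℝ) * ((A + B k) / 2) := by
          refine add_le_add (Finset.sum_le_sum fun t _ => ?_) le_rfl
          exact F3 ((t : ℕ) : ℤ)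
      _ = (N : ℝ) * D + ∑ k : Fin n, 2 * (k : ℝ) * ((A + B k) / 2) := by
          rw [Finset.sum_const, Finset.card_range, nsmul_eq_mul]
  have hcD : c ≤ D := by
    by_contra hlt
    push_neg at hlt
    have hE0 : 0 ≤ ∑ k : Fin n, 2 * (k : ℝ) * ((A + B k) / 2) :=
      Finset.sum_nonneg fun k _ => mul_nonneg (by positivity) (by linarith [hBpos k])
    set E : ℝ := ∑ k : Fin n, 2 * (k : ℝ) * ((A + B k) / 2) with hE
    obtain ⟨N₀, hN₀⟩ := exists_nat_gt (E / (c - D))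
    set N : ℕ := max N₀ n + 1 with hNdef
    have hnN : n ≤ N := le_trans (le_max_right _ _) (Nat.le_succ _)
    have hNc' := hNc N hnN
    have hcast : (N₀ : ℝ) ≤ (N : ℝ) := by
      exact_mod_cast le_trans (le_max_left N₀ n) (Nat.le_succ _)
    have hNgt : E / (c - D) < (N : ℝ) := lt_of_lt_of_le hN₀ hcast
    have hpos : (0 : ℝ) < c - D := sub_pos.2 hlt
    have hlt2 : E < (N : ℝ) * (c - D) := (div_lt_iff₀ hpos).1 hNgt
    have hexp : (N : ℝ) * (c - D) = (N : ℝ) * c - (N : ℝ) * D := by ring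
    linarith
  -- final expansion
  have hSmap0 : ∀ x : ℤ → ℝ, Smap f x 0 = S0 f x := by
    intro x
    show S0 f (fun s => x (s + 0)) = S0 f x
    congr 1
    funext s
    rw [add_zero]
  have hDD : (∫ x, x 0 * S0 f x ∂μX) = D := by
    rw [hD]
    have he : (fun x : ℤ → ℝ => x 0 * S0 f x)
        = fun x => ∑ k : Fin n,
            (win n (-(k : ℤ)) x) k * fderiv ℝ f (win n (-(k : ℤ)) x) (Pi.single k 1) := by
      funext x
      rw [congrFun hS0_eq x, Finset.mul_sum]
      refine Finset.sum_congr rfl fun k _ => ?_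
      have hxw : win n (-(k : ℤ)) x k = x 0 := by
        simp only [win]
        congr 1
        omega
      rw [hxw]
    rw [he, integral_finset_sum _ (fun k _ =>
      integrable_of_map (φ := fun v : Fin n → ℝ => v k * fderiv ℝ f v (Pi.single k 1))
          (measurable_win _) (hwin_map _)
        ((measurable_pi_apply k).mul (measurable_G f k))
        (integrable_mul2 (hcoord k) (hGk k)))]
    exact Finset.sum_congr rfl fun k _ =>
      integral_of_map (φ := fun v : Fin n → ℝ => v k * fderiv ℝ f v (Pi.single k 1))
          (measurable_win _) (hwin_map _)
        ((measurable_pi_apply k).mul (measurable_G f k))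
  have hXint1 : Integrable (fun x : ℤ → ℝ => (x 0) ^ 2) μX := hx0.integrable_sq
  have hXint2 : Integrable (fun x : ℤ → ℝ => (S0 f x) ^ 2) μX := hS0_L2.integrable_sq
  have hXint3 : Integrable (fun x : ℤ → ℝ => x 0 * S0 f x) μX := integrable_mul2 hx0 hS0_L2
  have hLexp : (∫ x, (x 0 - S0 f x) ^ 2 ∂μX)
      = A - 2 * (∫ x, x 0 * S0 f x ∂μX) + ∫ x, (S0 f x) ^ 2 ∂μX := by
    have he : (fun x : ℤ → ℝ => (x 0 - S0 f x) ^ 2)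
        = fun x => (x 0) ^ 2 - 2 * (x 0 * S0 f x) + (S0 f x) ^ 2 := by
      funext x; ring
    rw [he]
    have Hs : Integrable (fun x : ℤ → ℝ => (x 0) ^ 2 - 2 * (x 0 * S0 f x)) μX :=
      hXint1.sub (hXint3.const_mul 2)
    rw [integral_add Hs hXint2, integral_sub hXint1 (hXint3.const_mul 2),
      integral_const_mul, hA]
  have hπy0 : MemLp (fun p : (ℤ → ℝ) × (ℤ → ℝ) => p.1 0) 2 π :=
    memL2_of_map measurable_fst hπ1 (measurable_pi_apply 0) hx0
  have hμS0 : MemLp (fun z : ℤ → ℝ => z 0) 2 μS := by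
    rw [hμS]
    refine (memLp_map_measure_iff (measurable_pi_apply 0).aestronglyMeasurable
      (measurable_Smap f).aemeasurable).2 ?_
    have he : ((fun z : ℤ → ℝ => z 0) ∘ Smap f) = S0 f := by
      funext x; exact hSmap0 x
    rw [he]; exact hS0_L2
  have hπz0 : MemLp (fun p : (ℤ → ℝ) × (ℤ → ℝ) => p.2 0) 2 π :=
    memL2_of_map measurable_snd hπ2 (measurable_pi_apply 0) hμS0
  have hπA : (∫ p : (ℤ → ℝ) × (ℤ → ℝ), (p.1 0) ^ 2 ∂π) = A := by
    have h1 := integral_of_map (P := π) measurable_fst hπ1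
      ((measurable_pi_apply 0).pow_const 2)
    rw [hA]; exact h1
  have hπS : (∫ p : (ℤ → ℝ) × (ℤ → ℝ), (p.2 0) ^ 2 ∂π) = ∫ x, (S0 f x) ^ 2 ∂μX := by
    have h1 := integral_of_map (P := π) measurable_snd hπ2
      ((measurable_pi_apply 0).pow_const 2)
    have h2 := integral_of_map (P := μX) (measurable_Smap f) hμS.symm
      ((measurable_pi_apply 0).pow_const 2)
    rw [h1, ← h2]
    refine integral_congr_ae (Filter.Eventually.of_forall fun x => ?_)
    exact congrArg (fun r : ℝ => r ^ 2) (hSmap0 x)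
  have hRexp : (∫ p : (ℤ → ℝ) × (ℤ → ℝ), (p.1 0 - p.2 0) ^ 2 ∂π)
      = A + (∫ x, (S0 f x) ^ 2 ∂μX) - 2 * c := by
    have he : (fun p : (ℤ → ℝ) × (ℤ → ℝ) => (p.1 0 - p.2 0) ^ 2)
        = fun p => (p.1 0) ^ 2 + (p.2 0) ^ 2 - 2 * (p.1 0 * p.2 0) := by
      funext p; ring
    rw [he]
    have Hadd : Integrable (fun p : (ℤ → ℝ) × (ℤ → ℝ) => (p.1 0) ^ 2 + (p.2 0) ^ 2) π :=
      hπy0.integrable_sq.add hπz0.integrable_sq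
    rw [integral_sub Hadd ((integrable_mul2 hπy0 hπz0).const_mul 2),
      integral_add hπy0.integrable_sq hπz0.integrable_sq,
      integral_const_mul, hπA, hπS, hc]
  rw [hLexp, hRexp, hDD]
  linarith

end OSCaux

/-- Theorem 2.2: `(X, S(X))` is an optimal stationary coupling of `μ` and `μ^S`
w.r.t. squared distance, for `S` built from the gradient of a convex function. -/
theorem optimal_stationary_coupling_sq
    {α : Type*} [MeasurableSpace α] (μ : Measure α) [IsProbabilityMeasure μ]
    {n : ℕ} (f : (Fin n → ℝ) → ℝ) (hconv : ConvexOn ℝ Set.univ f)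
    (hdiff : Differentiable ℝ f)
    (X : α → (ℤ → ℝ)) (hXm : Measurable X)
    (hstat : μ.map (fun a => leftShift (X a)) = μ.map X)
    (hX0 : MemLp (fun a => X a 0) 2 μ)
    (hgrad : ∀ k : Fin n,
      MemLp (fun a => fderiv ℝ f (fun j : Fin n => X a (j : ℤ)) (Pi.single k 1)) 2 μ)
    {β : Type*} [MeasurableSpace β] (ν : Measure β) [IsProbabilityMeasure ν]
    (Y Z : β → (ℤ → ℝ)) (hYm : Measurable Y) (hZm : Measurable Z)
    (hjoint : ν.map (fun b => (leftShift (Y b), leftShift (Z b)))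
        = ν.map (fun b => (Y b, Z b)))
    (hY : ν.map Y = μ.map X)
    (hZ : ν.map Z = (μ.map X).map (Smap f)) :
    ∫ a, (X a 0 - S0 f (X a)) ^ 2 ∂μ ≤ ∫ b, (Y b 0 - Z b 0) ^ 2 ∂ν := by
  open OSCaux in
  set μX : Measure (ℤ → ℝ) := μ.map X with hμX
  haveI : IsProbabilityMeasure μX := Measure.isProbabilityMeasure_map hXm.aemeasurable
  have hpair : Measurable fun b => (Y b, Z b) := hYm.prodMk hZm
  set π : Measure ((ℤ → ℝ) × (ℤ → ℝ)) := ν.map (fun b => (Y b, Z b)) with hπ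
  haveI : IsProbabilityMeasure π := Measure.isProbabilityMeasure_map hpair.aemeasurable
  have hstatX : μX.map (tau (-1)) = μX := by
    rw [← leftShift_eq_tau, hμX,
      Measure.map_map measurable_leftShift hXm]
    exact hstat
  have hx0 : MemLp (fun x : ℤ → ℝ => x 0) 2 μX := by
    rw [hμX]
    exact (memLp_map_measure_iff (measurable_pi_apply 0).aestronglyMeasurable
      hXm.aemeasurable).2 hX0
  have hg : ∀ k : Fin n,
      MemLp (fun x : ℤ → ℝ => fderiv ℝ f (fun j : Fin n => x (j : ℤ))
        (Pi.single k 1)) 2 μX := by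
    intro k
    rw [hμX]
    refine (memLp_map_measure_iff ?_ hXm.aemeasurable).2 (hgrad k)
    exact ((measurable_G f k).comp
      (measurable_pi_lambda _ fun _ => measurable_pi_apply _)).aestronglyMeasurable
  have hπstat : π.map (Prod.map (tau (-1)) (tau (-1))) = π := by
    rw [hπ, Measure.map_map (((measurable_tau (-1)).prodMap (measurable_tau (-1)))) hpair]
    rw [← leftShift_eq_tau]
    exact hjoint
  have hπ1 : π.map Prod.fst = μX := by
    rw [hπ, Measure.map_map measurable_fst hpair]
    exact hY
  have hπ2 : π.map Prod.snd = μX.map (Smap f) := by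
    rw [hπ, Measure.map_map measurable_snd hpair]
    exact hZ
  have h := OSCaux.key f hconv hdiff μX hstatX hx0 hg π hπstat hπ1 hπ2
  have hL : ∫ x, (x 0 - S0 f x) ^ 2 ∂μX = ∫ a, (X a 0 - S0 f (X a)) ^ 2 ∂μ := by
    rw [hμX, integral_map hXm.aemeasurable]
    exact (((measurable_pi_apply 0).sub (measurable_S0 f)).pow_const 2).aestronglyMeasurable
  have hR : ∫ p : (ℤ → ℝ) × (ℤ → ℝ), (p.1 0 - p.2 0) ^ 2 ∂π
      = ∫ b, (Y b 0 - Z b 0) ^ 2 ∂ν := by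
    rw [hπ, integral_map hpair.aemeasurable]
    exact (((measurable_fst.eval).sub (measurable_snd.eval)).pow_const 2).aestronglyMeasurable
  rw [hL, hR] at h
  exact h
end

section
/- Let E1, E2 ⊂ R be disjoint open intervals and p ≥ 2. For the cost c(x,y) = |x−y|^p / p on E1 × E2, the mixed second derivative c_{x,y} = −(p−1)|x−y|^{p−2} is nonzero everywhere, and the cross-curvature quantity σ(x,y) = −c_{xx,yy} + c_{xx,y} c_{x,yy} / c_{x,y} equals (p−1)(p−2)|x−y|^{p−4} ≥ 0 for all (x,y) ∈ E1 × E2. -/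
open Filter Real


lemma abs_rpow_hasDerivAt {a u : ℝ} (hu : u ≠ 0) :
    HasDerivAt (fun t : ℝ => |t| ^ a) (a * |u| ^ (a - 2) * u) u := by
  have hpos : 0 < |u| := abs_pos.2 hu
  have h1 : HasDerivAt (fun t : ℝ => t ^ a) (a * |u| ^ (a - 1)) |u| :=
    Real.hasDerivAt_rpow_const (Or.inl hpos.ne')
  have h2 : HasDerivAt (fun t : ℝ => |t|) (SignType.sign u : ℝ) u := hasDerivAt_abs hu
  have := h1.comp u h2
  refine this.congr_deriv ?_; symm
  have habs : |u| ^ (a - 1) = |u| ^ (a - 2) * |u| := by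
    rw [show a - 1 = (a - 2) + 1 by ring, Real.rpow_add hpos, Real.rpow_one]
  have key : |u| * (SignType.sign u : ℝ) = u := by
    rcases hu.lt_or_gt with h | h
    · simp [abs_of_neg h, h]
    · simp [abs_of_pos h, h]
  rw [habs]
  linear_combination (-(a * |u| ^ (a - 2))) * key

lemma F1x {C a x y : ℝ} (h : x ≠ y) :
    HasDerivAt (fun x' => C * |x' - y| ^ a) (C * a * |x - y| ^ (a - 2) * (x - y)) x := by
  have hinner : HasDerivAt (fun x' : ℝ => x' - y) 1 x := (hasDerivAt_id x).sub_const y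
  have := ((abs_rpow_hasDerivAt (a := a) (sub_ne_zero.2 h)).comp x hinner).const_mul C
  refine this.congr_deriv ?_; symm; ring

lemma F1y {C a x y : ℝ} (h : x ≠ y) :
    HasDerivAt (fun y' => C * |x - y'| ^ a) (-(C * a) * |x - y| ^ (a - 2) * (x - y)) y := by
  have hinner : HasDerivAt (fun y' : ℝ => x - y') (-1) y := by
    simpa using (hasDerivAt_id y).const_sub x
  have := ((abs_rpow_hasDerivAt (a := a) (sub_ne_zero.2 h)).comp y hinner).const_mul C
  refine this.congr_deriv ?_; symm; ring

lemma abs_rpow_mul_self {a d : ℝ} (hd : d ≠ 0) :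
    |d| ^ (a - 2) * d * d = |d| ^ a := by
  have hpos : 0 < |d| := abs_pos.2 hd
  have h1 : d * d = |d| * |d| := (abs_mul_abs_self d).symm
  have h2 : |d| * |d| = |d| ^ (2 : ℝ) := by
    rw [show (2:ℝ) = ((2:ℕ):ℝ) by norm_num, Real.rpow_natCast]; ring
  rw [mul_assoc, h1, h2, ← Real.rpow_add hpos]
  norm_num

lemma F2x {C a x y : ℝ} (h : x ≠ y) :
    HasDerivAt (fun x' => C * |x' - y| ^ a * (x' - y)) (C * (a + 1) * |x - y| ^ a) x := by
  have hinner : HasDerivAt (fun x' : ℝ => x' - y) 1 x := (hasDerivAt_id x).sub_const y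
  have := (F1x (C := C) (a := a) h).mul hinner
  refine this.congr_deriv ?_; symm
  linear_combination (-(C * a)) * abs_rpow_mul_self (a := a) (sub_ne_zero.2 h)

lemma F2y {C a x y : ℝ} (h : x ≠ y) :
    HasDerivAt (fun y' => C * |x - y'| ^ a * (x - y')) (-(C * (a + 1)) * |x - y| ^ a) y := by
  have hinner : HasDerivAt (fun y' : ℝ => x - y') (-1) y := by
    simpa using (hasDerivAt_id y).const_sub x
  have := (F1y (C := C) (a := a) h).mul hinner
  refine this.congr_deriv ?_; symm
  linear_combination (C * a) * abs_rpow_mul_self (a := a) (sub_ne_zero.2 h)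

lemma calc_aux (p B d : ℝ) (hp1 : p - 1 ≠ 0) (hB : B ≠ 0) (hd : d ≠ 0) :
    -((p - 1) * (p - 2) * (p - 3) * B) +
      -((p - 1) * (p - 2)) * B * d * ((p - 1) * (p - 2) * B * d) / (-(p - 1) * (B * d ^ 2))
      = (p - 1) * (p - 2) * B := by
  have hD : -(p - 1) * (B * d ^ 2) ≠ 0 :=
    mul_ne_zero (neg_ne_zero.2 hp1) (mul_ne_zero hB (pow_ne_zero 2 hd))
  have hx : -((p - 1) * (p - 2)) * B * d * ((p - 1) * (p - 2) * B * d) / (-(p - 1) * (B * d ^ 2))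
      = (p - 1) * (p - 2) ^ 2 * B := by
    rw [div_eq_iff hD]; ring
  rw [hx]; ring

lemma keyA (p : ℝ) (hp0 : p ≠ 0) {x y : ℝ} (h : x ≠ y) :
    deriv (fun t => |t - y| ^ p / p) x = |x - y| ^ (p - 2) * (x - y) := by
  have h0 := (F1x (C := (1:ℝ)) (a := p) h).div_const p
  have h1 : HasDerivAt (fun t => |t - y| ^ p / p)
      ((1 * p * |x - y| ^ (p - 2) * (x - y)) / p) x :=
    h0.congr_of_eventuallyEq (Eventually.of_forall fun t => by ring)
  rw [h1.deriv]; field_simp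

/-- For disjoint open intervals `E1, E2 ⊂ ℝ` and `c(x,y) = |x−y|^p/p` with `p ≥ 2`:
`c_{x,y} = −(p−1)|x−y|^{p−2} ≠ 0` and
`σ = −c_{xx,yy} + c_{xx,y} c_{x,yy}/c_{x,y} = (p−1)(p−2)|x−y|^{p−4} ≥ 0`. -/
theorem power_cost_cross_curvature (p : ℝ) (hp : 2 ≤ p) (E1 E2 : Set ℝ)
    (h1 : ∃ a b : ℝ, E1 = Set.Ioo a b) (h2 : ∃ a b : ℝ, E2 = Set.Ioo a b)
    (hd : Disjoint E1 E2) :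
    let c : ℝ → ℝ → ℝ := fun x y => |x - y| ^ p / p
    let cx : ℝ → ℝ → ℝ := fun x y => deriv (fun x' => c x' y) x
    let cxx : ℝ → ℝ → ℝ := fun x y => deriv (fun x' => cx x' y) x
    let cxy : ℝ → ℝ → ℝ := fun x y => deriv (fun y' => cx x y') y
    let cxyy : ℝ → ℝ → ℝ := fun x y => deriv (fun y' => cxy x y') y
    let cxxy : ℝ → ℝ → ℝ := fun x y => deriv (fun y' => cxx x y') y
    let cxxyy : ℝ → ℝ → ℝ := fun x y => deriv (fun y' => cxxy x y') y
    ∀ x ∈ E1, ∀ y ∈ E2,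
      cxy x y = -(p - 1) * |x - y| ^ (p - 2) ∧
      cxy x y ≠ 0 ∧
      -(cxxyy x y) + cxxy x y * cxyy x y / cxy x y
        = (p - 1) * (p - 2) * |x - y| ^ (p - 4) ∧
      0 ≤ -(cxxyy x y) + cxxy x y * cxyy x y / cxy x y := by
  intro c cx cxx cxy cxyy cxxy cxxyy x hx1 y hy1
  have hp0 : p ≠ 0 := by linarith
  have hxy : x ≠ y := by
    intro h; exact Set.disjoint_left.mp hd hx1 (h ▸ hy1)
  -- cx formula
  have e1 : ∀ x' y' : ℝ, x' ≠ y' → cx x' y' = |x' - y'| ^ (p - 2) * (x' - y') :=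
    fun x' y' h => keyA p hp0 h
  -- cxx formula
  have e2 : ∀ x' y' : ℝ, x' ≠ y' → cxx x' y' = (p - 1) * |x' - y'| ^ (p - 2) := by
    intro x' y' h
    have hev : (fun t => cx t y') =ᶠ[nhds x']
        (fun t => 1 * |t - y'| ^ (p - 2) * (t - y')) := by
      filter_upwards [eventually_ne_nhds h] with t ht
      rw [e1 t y' ht]; ring
    show deriv (fun t => cx t y') x' = _
    rw [hev.deriv_eq, (F2x (C := (1:ℝ)) (a := p - 2) h).deriv]; ring
  -- cxy formula
  have e3 : ∀ y' : ℝ, x ≠ y' → cxy x y' = -(p - 1) * |x - y'| ^ (p - 2) := by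
    intro y' h
    have hev : (fun t => cx x t) =ᶠ[nhds y']
        (fun t => 1 * |x - t| ^ (p - 2) * (x - t)) := by
      filter_upwards [eventually_ne_nhds h.symm] with t ht
      rw [e1 x t (Ne.symm ht)]; ring
    show deriv (fun t => cx x t) y' = _
    rw [hev.deriv_eq, (F2y (C := (1:ℝ)) (a := p - 2) h).deriv]; ring
  -- cxyy formula
  have e4 : cxyy x y = (p - 1) * (p - 2) * |x - y| ^ (p - 4) * (x - y) := by
    have hev : (fun t => cxy x t) =ᶠ[nhds y]
        (fun t => -(p - 1) * |x - t| ^ (p - 2)) := by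
      filter_upwards [eventually_ne_nhds hxy.symm] with t ht
      exact e3 t (Ne.symm ht)
    show deriv (fun t => cxy x t) y = _
    rw [hev.deriv_eq, (F1y (C := -(p - 1)) (a := p - 2) hxy).deriv,
      show p - 2 - 2 = p - 4 by ring]
    try ring
  -- cxxy formula
  have e5 : ∀ y' : ℝ, x ≠ y' →
      cxxy x y' = -((p - 1) * (p - 2)) * |x - y'| ^ (p - 4) * (x - y') := by
    intro y' h
    have hev : (fun t => cxx x t) =ᶠ[nhds y']
        (fun t => (p - 1) * |x - t| ^ (p - 2)) := by
      filter_upwards [eventually_ne_nhds h.symm] with t ht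
      exact e2 x t (Ne.symm ht)
    show deriv (fun t => cxx x t) y' = _
    rw [hev.deriv_eq, (F1y (C := p - 1) (a := p - 2) h).deriv,
      show p - 2 - 2 = p - 4 by ring]
    try ring
  -- cxxyy formula
  have e6 : cxxyy x y = (p - 1) * (p - 2) * (p - 3) * |x - y| ^ (p - 4) := by
    have hev : (fun t => cxxy x t) =ᶠ[nhds y]
        (fun t => -((p - 1) * (p - 2)) * |x - t| ^ (p - 4) * (x - t)) := by
      filter_upwards [eventually_ne_nhds hxy.symm] with t ht
      exact e5 t (Ne.symm ht)
    show deriv (fun t => cxxy x t) y = _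
    rw [hev.deriv_eq, (F2y (C := -((p - 1) * (p - 2))) (a := p - 4) hxy).deriv]
    try ring
  have hdne : x - y ≠ 0 := sub_ne_zero.2 hxy
  have hpos : (0:ℝ) < |x - y| := abs_pos.2 hdne
  have hBpos : (0:ℝ) < |x - y| ^ (p - 4) := Real.rpow_pos_of_pos hpos _
  have hApos : (0:ℝ) < |x - y| ^ (p - 2) := Real.rpow_pos_of_pos hpos _
  have hAB : |x - y| ^ (p - 2) = |x - y| ^ (p - 4) * (x - y) ^ 2 := by
    have := abs_rpow_mul_self (a := p - 2) hdne
    rw [show p - 2 - 2 = p - 4 by ring] at this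
    rw [← this]; ring
  have hp1 : p - 1 ≠ 0 := by linarith
  refine ⟨e3 y hxy, ?_, ?_, ?_⟩
  · rw [e3 y hxy]
    exact mul_ne_zero (neg_ne_zero.2 hp1) hApos.ne'
  · rw [e6, e5 y hxy, e4, e3 y hxy, hAB]
    linear_combination calc_aux p (|x - y| ^ (p - 4)) (x - y) hp1 hBpos.ne' hdne
  · rw [e6, e5 y hxy, e4, e3 y hxy, hAB,
      calc_aux p (|x - y| ^ (p - 4)) (x - y) hp1 hBpos.ne' hdne]
    exact mul_nonneg (mul_nonneg (by linarith) (by linarith)) hBpos.le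
end

section
/- Let G be the free group on two generators f1 and f2. Then there is no sequence (F_n) of nonempty finite subsets of G satisfying |F_n ∩ (hF_n)|/|F_n| → 1 for all h ∈ G; in fact, for any nonempty finite F ⊂ G, the boundary set (f1 F ∪ f2 F ∪ f1^{−1} F ∪ f2^{−1} F) \ F has at least |F| + 2 elements. -/
open FreeGroup


variable {α : Type*} [DecidableEq α]

lemma toWord_letter_mul (x : α × Bool) (g : FreeGroup α) :
    (FreeGroup.mk [x] * g).toWord =
      List.casesOn g.toWord [x] fun hd tl =>
        if x.1 = hd.1 ∧ x.2 = !hd.2 then tl else x :: hd :: tl := by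
  conv_lhs => rw [← FreeGroup.mk_toWord (x := g), FreeGroup.mul_mk]
  rw [show ([x] ++ g.toWord) = x :: g.toWord from rfl, FreeGroup.toWord_mk,
    FreeGroup.reduce.cons, FreeGroup.reduce_toWord]

lemma norm_letter_mul_dichotomy (x : α × Bool) (g : FreeGroup α) :
    norm g < norm (FreeGroup.mk [x] * g) ∨ norm (FreeGroup.mk [x] * g) < norm g := by
  unfold FreeGroup.norm
  rw [toWord_letter_mul]
  cases h : g.toWord with
  | nil => simp
  | cons hd tl =>
    by_cases hc : x.1 = hd.1 ∧ x.2 = !hd.2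
    · right; simp [hc]
    · left; simp [hc]

lemma norm_letter_mul_unique {x y : α × Bool} {g : FreeGroup α}
    (hx : norm (FreeGroup.mk [x] * g) < norm g)
    (hy : norm (FreeGroup.mk [y] * g) < norm g) : x = y := by
  unfold FreeGroup.norm at hx hy
  rw [toWord_letter_mul] at hx hy
  cases h : g.toWord with
  | nil => rw [h] at hx; simp at hx
  | cons hd tl =>
    rw [h] at hx hy
    by_cases hcx : x.1 = hd.1 ∧ x.2 = !hd.2
    · by_cases hcy : y.1 = hd.1 ∧ y.2 = !hd.2
      · exact Prod.ext (hcx.1.trans hcy.1.symm) (hcx.2.trans hcy.2.symm)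
      · simp [hcy] at hy
    · simp [hcx] at hx

namespace FG2aux
abbrev Gb := FreeGroup Bool
def f1 : Gb := FreeGroup.of true
def f2 : Gb := FreeGroup.of false

lemma f1_eq : f1 = FreeGroup.mk [(true, true)] := rfl
lemma f2_eq : f2 = FreeGroup.mk [(false, true)] := rfl
lemma f1_inv_eq : f1⁻¹ = FreeGroup.mk [(true, false)] := by
  rw [f1_eq, FreeGroup.inv_mk]; rfl
lemma f2_inv_eq : f2⁻¹ = FreeGroup.mk [(false, false)] := by
  rw [f2_eq, FreeGroup.inv_mk]; rfl

lemma mk_letter_inj {x y : Bool × Bool} (h : FreeGroup.mk [x] = FreeGroup.mk [y]) : x = y := by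
  have := congrArg FreeGroup.toWord h
  rw [FreeGroup.toWord_mk, FreeGroup.toWord_mk, FreeGroup.reduce_singleton,
    FreeGroup.reduce_singleton] at this
  exact List.singleton_injective this

def S : Finset Gb := {f1, f2, f1⁻¹, f2⁻¹}

lemma mem_S_iff {s : Gb} : s ∈ S ↔ s = f1 ∨ s = f2 ∨ s = f1⁻¹ ∨ s = f2⁻¹ := by
  simp [S]

lemma exists_letter {s : Gb} (hs : s ∈ S) : ∃ x : Bool × Bool, s = FreeGroup.mk [x] := by
  rcases mem_S_iff.1 hs with h | h | h | h
  · exact ⟨_, h.trans f1_eq⟩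
  · exact ⟨_, h.trans f2_eq⟩
  · exact ⟨_, h.trans f1_inv_eq⟩
  · exact ⟨_, h.trans f2_inv_eq⟩

lemma inv_mem_S {s : Gb} (hs : s ∈ S) : s⁻¹ ∈ S := by
  rcases mem_S_iff.1 hs with h | h | h | h <;> subst h <;> simp [mem_S_iff]

lemma card_S : S.card = 4 := by
  have hne : ∀ x y : Bool × Bool, x ≠ y → FreeGroup.mk [x] ≠ FreeGroup.mk [y] :=
    fun x y hxy h => hxy (mk_letter_inj h)
  have h12 : f1 ≠ f2 := by rw [f1_eq, f2_eq]; exact hne _ _ (by decide)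
  have h13 : f1 ≠ f1⁻¹ := by rw [f1_inv_eq, f1_eq]; exact hne _ _ (by decide)
  have h14 : f1 ≠ f2⁻¹ := by rw [f2_inv_eq, f1_eq]; exact hne _ _ (by decide)
  have h23 : f2 ≠ f1⁻¹ := by rw [f1_inv_eq, f2_eq]; exact hne _ _ (by decide)
  have h24 : f2 ≠ f2⁻¹ := by rw [f2_inv_eq, f2_eq]; exact hne _ _ (by decide)
  have h34 : f1⁻¹ ≠ f2⁻¹ := by rw [f1_inv_eq, f2_inv_eq]; exact hne _ _ (by decide)
  simp [S, Finset.card_insert_of_notMem, h12, h13, h14, h23, h24, h34]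


open Finset in
def bd (F : Finset Gb) : Finset Gb :=
  (F.image (fun g => f1 * g) ∪ F.image (fun g => f2 * g) ∪
   F.image (fun g => f1⁻¹ * g) ∪ F.image (fun g => f2⁻¹ * g)) \ F

lemma mul_mem_bd {F : Finset Gb} {s u : Gb} (hs : s ∈ S) (hu : u ∈ F) (h : s * u ∉ F) :
    s * u ∈ bd F := by
  rw [bd, Finset.mem_sdiff]
  refine ⟨?_, h⟩
  rcases mem_S_iff.1 hs with rfl | rfl | rfl | rfl
  · exact Finset.mem_union_left _ (Finset.mem_union_left _ (Finset.mem_union_left _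
      (Finset.mem_image_of_mem _ hu)))
  · exact Finset.mem_union_left _ (Finset.mem_union_left _ (Finset.mem_union_right _
      (Finset.mem_image_of_mem _ hu)))
  · exact Finset.mem_union_left _ (Finset.mem_union_right _ (Finset.mem_image_of_mem _ hu))
  · exact Finset.mem_union_right _ (Finset.mem_image_of_mem _ hu)

lemma mem_bd {F : Finset Gb} {w : Gb} (hw : w ∈ bd F) :
    (∃ s ∈ S, ∃ u ∈ F, w = s * u) ∧ w ∉ F := by
  rw [bd, Finset.mem_sdiff] at hw
  refine ⟨?_, hw.2⟩
  have h1 := hw.1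
  simp only [Finset.mem_union, Finset.mem_image] at h1
  rcases h1 with ((⟨u, hu, rfl⟩ | ⟨u, hu, rfl⟩) | ⟨u, hu, rfl⟩) | ⟨u, hu, rfl⟩
  · exact ⟨f1, by simp [mem_S_iff], u, hu, rfl⟩
  · exact ⟨f2, by simp [mem_S_iff], u, hu, rfl⟩
  · exact ⟨f1⁻¹, by simp [mem_S_iff], u, hu, rfl⟩
  · exact ⟨f2⁻¹, by simp [mem_S_iff], u, hu, rfl⟩

open FreeGroup in
lemma three_le_T (g : Gb) : 3 ≤ (S.filter (fun s => norm g < norm (s * g))).card := by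
  classical
  have h1 : (S.filter (fun s => ¬ norm g < norm (s * g))).card ≤ 1 := by
    rw [Finset.card_le_one]
    intro a ha b hb
    rw [Finset.mem_filter] at ha hb
    obtain ⟨x, rfl⟩ := exists_letter ha.1
    obtain ⟨y, rfl⟩ := exists_letter hb.1
    have hax : norm (FreeGroup.mk [x] * g) < norm g :=
      (norm_letter_mul_dichotomy x g).resolve_left ha.2
    have hby : norm (FreeGroup.mk [y] * g) < norm g :=
      (norm_letter_mul_dichotomy y g).resolve_left hb.2
    rw [norm_letter_mul_unique hax hby]
  have h2 := Finset.card_filter_add_card_filter_not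
    (s := S) (p := fun s => norm g < norm (s * g))
  try simp only at h2
  have := card_S
  omega

open FreeGroup in
lemma bd_card : ∀ F : Finset Gb, F.Nonempty → F.card + 2 ≤ (bd F).card := by
  classical
  intro F
  induction F using Finset.strongInduction with
  | _ F ih =>
  intro hF
  obtain ⟨g, hgF, hgmax⟩ := Finset.exists_max_image F (fun x => norm x) hF
  set T : Finset Gb := S.filter (fun s => norm g < norm (s * g)) with hT
  set W : Finset Gb := T.image (fun s => s * g) with hW
  have hWcard : 3 ≤ W.card := by
    rw [hW, Finset.card_image_of_injective _ (mul_left_injective g)]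
    exact three_le_T g
  have hWnorm : ∀ w ∈ W, norm g < norm w := by
    intro w hw
    rw [hW, Finset.mem_image] at hw
    obtain ⟨s, hsT, rfl⟩ := hw
    exact (Finset.mem_filter.1 hsT).2
  have hWbd : W ⊆ bd F := by
    intro w hw
    have hnorm := hWnorm w hw
    rw [hW, Finset.mem_image] at hw
    obtain ⟨s, hsT, rfl⟩ := hw
    refine mul_mem_bd (Finset.mem_filter.1 hsT).1 hgF (fun hmem => ?_)
    exact absurd (hgmax _ hmem) (not_le.2 hnorm)
  rcases (F.erase g).eq_empty_or_nonempty with he | hne'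
  · have hFg : F = {g} := ((F.erase_eq_empty_iff g).1 he).resolve_left
      (Finset.nonempty_iff_ne_empty.1 hF)
    have : F.card = 1 := by rw [hFg]; simp
    have := Finset.card_le_card hWbd
    omega
  · set F' := F.erase g with hF'
    have hss : F' ⊂ F := Finset.erase_ssubset hgF
    have ihF' := ih F' hss hne'
    have hgF' : g ∉ F' := Finset.notMem_erase g F
    have hFins : insert g F' = F := Finset.insert_erase hgF
    -- W is disjoint from bd F'
    have hdisj : ∀ w ∈ W, w ∉ bd F' := by
      intro w hw hwbd
      have hnorm := hWnorm w hw
      rw [hW, Finset.mem_image] at hw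
      obtain ⟨s, hsT, rfl⟩ := hw
      have hsS : s ∈ S := (Finset.mem_filter.1 hsT).1
      obtain ⟨⟨t, htS, u, huF', hequ⟩, -⟩ := mem_bd hwbd
      obtain ⟨x, hx⟩ := exists_letter (inv_mem_S hsS)
      obtain ⟨y, hy⟩ := exists_letter (inv_mem_S htS)
      have hxl : norm (FreeGroup.mk [x] * (s * g)) < norm (s * g) := by
        rw [← hx, inv_mul_cancel_left]; exact hnorm
      have hyl : norm (FreeGroup.mk [y] * (s * g)) < norm (s * g) := by
        have hu : t⁻¹ * (s * g) = u := by rw [hequ, inv_mul_cancel_left]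
        rw [← hy, hu]
        calc norm u ≤ norm g := hgmax u (Finset.mem_of_mem_erase huF')
        _ < norm (s * g) := hnorm
      have hxy : x = y := norm_letter_mul_unique hxl hyl
      have hst : s = t := by
        have : s⁻¹ = t⁻¹ := by rw [hx, hy, hxy]
        simpa using congrArg (·⁻¹) this
      have : u = g := by
        have := hequ
        rw [← hst] at this
        exact mul_left_cancel this.symm
      rw [this] at huF'
      exact hgF' huF'
    -- (bd F').erase g ∪ W ⊆ bd F
    have hsub : (bd F').erase g ∪ W ⊆ bd F := by
      intro w hw
      rcases Finset.mem_union.1 hw with hw | hw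
      · have hwne : w ≠ g := Finset.ne_of_mem_erase hw
        obtain ⟨⟨s, hsS, u, huF', rfl⟩, hnF'⟩ := mem_bd (Finset.mem_of_mem_erase hw)
        refine mul_mem_bd hsS (Finset.mem_of_mem_erase huF') (fun hmem => ?_)
        rw [← hFins, Finset.mem_insert] at hmem
        exact hmem.elim hwne hnF'
      · exact hWbd hw
    have hdisj2 : Disjoint ((bd F').erase g) W := by
      rw [Finset.disjoint_right]
      intro w hwW hwE
      exact hdisj w hwW (Finset.mem_of_mem_erase hwE)
    have hcard1 : ((bd F').erase g ∪ W).card = ((bd F').erase g).card + W.card :=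
      Finset.card_union_of_disjoint hdisj2
    have hcard2 := Finset.card_le_card hsub
    have hcard3 : (bd F').card ≤ ((bd F').erase g).card + 1 := by
      by_cases hg : g ∈ bd F'
      · rw [Finset.card_erase_of_mem hg]; omega
      · rw [Finset.erase_eq_of_notMem hg]; omega
    have hcardF : F'.card + 1 = F.card := by
      rw [hF', Finset.card_erase_of_mem hgF]
      have := Finset.card_pos.2 hF
      omega
    omega

end FG2aux

open Filter
open scoped Topology Classical

/-- The free group on two generators admits no Følner sequence; in fact for every
nonempty finite `F`, the boundary `(f₁F ∪ f₂F ∪ f₁⁻¹F ∪ f₂⁻¹F) \ F` has at least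
`|F| + 2` elements. -/
theorem freeGroup_two_not_amenable :
    let G := FreeGroup Bool
    let f1 : G := FreeGroup.of true
    let f2 : G := FreeGroup.of false
    (¬ ∃ Fn : ℕ → Finset G, (∀ n, (Fn n).Nonempty) ∧
      ∀ h : G, Tendsto
        (fun n => ((Fn n ∩ (Fn n).image (fun g => h * g)).card : ℝ) / (Fn n).card)
        atTop (𝓝 1)) ∧
    (∀ F : Finset G, F.Nonempty →
      F.card + 2 ≤
        (((F.image (fun g => f1 * g) ∪ F.image (fun g => f2 * g) ∪
            F.image (fun g => f1⁻¹ * g) ∪ F.image (fun g => f2⁻¹ * g)) \ F)).card) := by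
  intro G f1 f2
  have hbd : ∀ F : Finset G, F.Nonempty →
      F.card + 2 ≤
        (((F.image (fun g => f1 * g) ∪ F.image (fun g => f2 * g) ∪
            F.image (fun g => f1⁻¹ * g) ∪ F.image (fun g => f2⁻¹ * g)) \ F)).card :=
    fun F hF => FG2aux.bd_card F hF
  refine ⟨?_, hbd⟩
  rintro ⟨Fn, hne, htend⟩
  set r : G → ℕ → ℝ :=
    fun h n => ((Fn n ∩ (Fn n).image (fun g => h * g)).card : ℝ) / (Fn n).card with hr
  -- the key pointwise inequality
  have key : ∀ n, (1 : ℝ) ≤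
      (1 - r f1 n) + (1 - r f2 n) + (1 - r f1⁻¹ n) + (1 - r f2⁻¹ n) := by
    intro n
    set F := Fn n with hFdef
    have hFne : F.Nonempty := hne n
    have hc0 : 0 < (F.card : ℝ) := by exact_mod_cast Finset.card_pos.2 hFne
    have hb := hbd F hFne
    have hXi : ∀ h : G, (F.image (fun g => h * g) \ F).card
        + (F ∩ F.image (fun g => h * g)).card = F.card := by
      intro h
      rw [Finset.inter_comm, Finset.card_sdiff_add_card_inter,
        Finset.card_image_of_injective _ (mul_right_injective h)]
    have hsplit : ((F.image (fun g => f1 * g) ∪ F.image (fun g => f2 * g) ∪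
            F.image (fun g => f1⁻¹ * g) ∪ F.image (fun g => f2⁻¹ * g)) \ F)
        = (F.image (fun g => f1 * g) \ F) ∪ (F.image (fun g => f2 * g) \ F) ∪
          (F.image (fun g => f1⁻¹ * g) \ F) ∪ (F.image (fun g => f2⁻¹ * g) \ F) := by
      rw [Finset.union_sdiff_distrib, Finset.union_sdiff_distrib, Finset.union_sdiff_distrib]
    rw [hsplit] at hb
    have hcard : ((F.image (fun g => f1 * g) \ F) ∪ (F.image (fun g => f2 * g) \ F) ∪
          (F.image (fun g => f1⁻¹ * g) \ F) ∪ (F.image (fun g => f2⁻¹ * g) \ F)).card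
        ≤ (F.image (fun g => f1 * g) \ F).card + (F.image (fun g => f2 * g) \ F).card +
          (F.image (fun g => f1⁻¹ * g) \ F).card + (F.image (fun g => f2⁻¹ * g) \ F).card := by
      calc _ ≤ ((F.image (fun g => f1 * g) \ F) ∪ (F.image (fun g => f2 * g) \ F) ∪
          (F.image (fun g => f1⁻¹ * g) \ F)).card + (F.image (fun g => f2⁻¹ * g) \ F).card :=
            Finset.card_union_le _ _
        _ ≤ ((F.image (fun g => f1 * g) \ F) ∪ (F.image (fun g => f2 * g) \ F)).card +
            (F.image (fun g => f1⁻¹ * g) \ F).card + (F.image (fun g => f2⁻¹ * g) \ F).card := by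
            have := Finset.card_union_le ((F.image (fun g => f1 * g) \ F) ∪
              (F.image (fun g => f2 * g) \ F)) (F.image (fun g => f1⁻¹ * g) \ F)
            omega
        _ ≤ _ := by
            have := Finset.card_union_le (F.image (fun g => f1 * g) \ F)
              (F.image (fun g => f2 * g) \ F)
            omega
    have h1 := hXi f1
    have h2 := hXi f2
    have h3 := hXi f1⁻¹
    have h4 := hXi f2⁻¹
    have hnat : (F ∩ F.image (fun g => f1 * g)).card + (F ∩ F.image (fun g => f2 * g)).card +
        (F ∩ F.image (fun g => f1⁻¹ * g)).card + (F ∩ F.image (fun g => f2⁻¹ * g)).card +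
        (F.card + 2) ≤ 4 * F.card := by omega
    have hre : ((F ∩ F.image (fun g => f1 * g)).card : ℝ)
        + (F ∩ F.image (fun g => f2 * g)).card
        + (F ∩ F.image (fun g => f1⁻¹ * g)).card
        + (F ∩ F.image (fun g => f2⁻¹ * g)).card ≤ 3 * (F.card : ℝ) - 2 := by
      have := (Nat.cast_le (α := ℝ)).2 hnat
      push_cast at this
      linarith
    have hdiv : (((F ∩ F.image (fun g => f1 * g)).card : ℝ)
        + (F ∩ F.image (fun g => f2 * g)).card
        + (F ∩ F.image (fun g => f1⁻¹ * g)).card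
        + (F ∩ F.image (fun g => f2⁻¹ * g)).card) / (F.card : ℝ) ≤ 3 := by
      rw [div_le_iff₀ hc0]
      linarith
    have hrw : (1 - r f1 n) + (1 - r f2 n) + (1 - r f1⁻¹ n) + (1 - r f2⁻¹ n)
        = 4 - (((F ∩ F.image (fun g => f1 * g)).card : ℝ)
        + (F ∩ F.image (fun g => f2 * g)).card
        + (F ∩ F.image (fun g => f1⁻¹ * g)).card
        + (F ∩ F.image (fun g => f2⁻¹ * g)).card) / (F.card : ℝ) := by
      rw [hr]
      simp only [← hFdef]
      field_simp
      ring
    rw [hrw]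
    linarith
  have t0 : Tendsto (fun n => (1 - r f1 n) + (1 - r f2 n) + (1 - r f1⁻¹ n) + (1 - r f2⁻¹ n))
      atTop (𝓝 ((1 - 1) + (1 - 1) + (1 - 1) + (1 - 1) : ℝ)) :=
    ((((htend f1).const_sub 1).add ((htend f2).const_sub 1)).add
      ((htend f1⁻¹).const_sub 1)).add ((htend f2⁻¹).const_sub 1)
  norm_num at t0
  have hev := t0.eventually_lt_const (by norm_num : (0:ℝ) < 1)
  obtain ⟨n, hn⟩ := hev.exists
  exact absurd (key n) (not_le.2 hn)
end
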